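/- Let (R,𝔪) be a Noetherian local ring, J an ideal of R, 𝔟 an ideal such that R/𝔟 is 𝔪-adically complete, and (𝔞_t) a decreasing sequence of ideals with ⋂_t 𝔞_t = 𝔟. Then ⋂_t (J·𝔞_t + 𝔪^t) ⊆ J·𝔟. -/

import Mathlib

open IsLocalRing

section Aux

variable {R : Type*} [CommRing R]

/-- A finitely generated module over a Noetherian ring annihilated by a maximal ideal
is Artinian. -/
theorem artinian_of_torsion_of_maximal (I : Ideal R) (hI : I.IsMaximal)
    (M : Type*) [AddCommGroup M] [Module R M] [Module.Finite R M]
    (h : ∀ a ∈ I, ∀ x : M, a • x = 0) : IsArtinian R M := by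
  have hT : Module.IsTorsionBySet R M I := fun x a => h a a.2 x
  letI := hT.module
  haveI : IsScalarTower R (R ⧸ I) M := hT.isScalarTower
  letI : Field (R ⧸ I) := Ideal.Quotient.field I
  haveI : Module.Finite (R ⧸ I) M := Module.Finite.of_restrictScalars_finite R (R ⧸ I) M
  haveI h' : IsArtinian (R ⧸ I) M := isArtinian_of_fg_of_artinian'
  have hsur : Function.Surjective (algebraMap R (R ⧸ I)) := by
    rw [Ideal.Quotient.algebraMap_eq]; exact Ideal.Quotient.mk_surjective
  have key : ∀ p : Submodule R M,
      (Submodule.span (R ⧸ I) (p : Set M)).restrictScalars R = p := fun p => by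
    rw [Submodule.restrictScalars_span R (R ⧸ I) hsur, Submodule.span_eq]
  rw [isArtinian_iff] at h' ⊢
  refine RelEmbedding.wellFounded (OrderEmbedding.ltEmbedding ?_) h'
  refine { toFun := fun p => Submodule.span (R ⧸ I) (p : Set M),
           inj' := fun p q hpq => by
             rw [← key p, ← key q]; exact congrArg _ hpq,
           map_rel_iff' := ?_ }
  intro p q
  constructor
  · intro hle
    rw [← key p, ← key q]
    exact fun x hx => hle hx
  · intro hle
    exact Submodule.span_mono hle

theorem isArtinian_quotient_pow [IsNoetherianRing R] [IsLocalRing R] (n : ℕ) :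
    IsArtinian R (R ⧸ (maximalIdeal R ^ n : Ideal R)) := by
  induction n with
  | zero =>
    have : Subsingleton (R ⧸ (maximalIdeal R ^ 0 : Ideal R)) := by
      rw [pow_zero, Ideal.one_eq_top]
      exact Submodule.Quotient.subsingleton_iff.mpr rfl
    exact isArtinian_of_finite
  | succ n ih =>
    set S : Submodule R (R ⧸ (maximalIdeal R ^ (n + 1) : Ideal R)) :=
      Submodule.map (maximalIdeal R ^ (n + 1) : Ideal R).mkQ
        (maximalIdeal R ^ n : Ideal R) with hS
    rw [isArtinian_iff_submodule_quotient S]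
    constructor
    · haveI : Module.Finite R S :=
        Module.Finite.iff_fg.mpr (IsNoetherian.noetherian S)
      apply artinian_of_torsion_of_maximal (maximalIdeal R) (maximalIdeal.isMaximal R)
      rintro c hc ⟨_, y, hy, rfl⟩
      apply Subtype.ext
      show c • ((maximalIdeal R ^ (n + 1) : Ideal R).mkQ y) = 0
      rw [← map_smul, Submodule.mkQ_apply, Submodule.Quotient.mk_eq_zero]
      show c • y ∈ (maximalIdeal R ^ (n + 1) : Ideal R)
      rw [smul_eq_mul, pow_succ]
      exact mul_comm c y ▸ Ideal.mul_mem_mul hy hc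
    · haveI := ih
      exact isArtinian_of_linearEquiv
        (Submodule.quotientQuotientEquivQuotient _ _
          (Ideal.pow_le_pow_right n.le_succ)).symm

theorem ideal_stabilizes [IsNoetherianRing R] [IsLocalRing R] (n : ℕ) (f : ℕ → Ideal R)
    (hf : Antitone f) (hge : ∀ t, maximalIdeal R ^ n ≤ f t) :
    ∃ T, ∀ s, T ≤ s → f s = f T := by
  haveI := isArtinian_quotient_pow (R := R) n
  let g : ℕ →o (Submodule R (R ⧸ (maximalIdeal R ^ n : Ideal R)))ᵒᵈ :=
    ⟨fun t => Submodule.map (maximalIdeal R ^ n : Ideal R).mkQ (f t),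
     fun s t hst => Submodule.map_mono (hf hst)⟩
  obtain ⟨T, hT⟩ := IsArtinian.monotone_stabilizes g
  have h1 : ∀ t, Submodule.comap (maximalIdeal R ^ n : Ideal R).mkQ (g t) = f t := fun t => by
    show Submodule.comap _ (Submodule.map _ _) = _
    rw [Submodule.comap_map_eq, Submodule.ker_mkQ, sup_eq_left.mpr (hge t)]
  exact ⟨T, fun s hs => by rw [← h1 s, ← h1 T, hT s hs]⟩

/-- Every ideal of a Noetherian local ring is closed in the `𝔪`-adic topology. -/
theorem iInf_add_pow_le [IsNoetherianRing R] [IsLocalRing R] (c : Ideal R) :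
    (⨅ n : ℕ, c + maximalIdeal R ^ n) ≤ c := by
  intro x hx
  have hm : maximalIdeal R ≠ ⊤ := (maximalIdeal.isMaximal R).ne_top
  have key := Ideal.iInf_pow_smul_eq_bot_of_isLocalRing (M := R ⧸ c) (maximalIdeal R) hm
  have hmem : c.mkQ x ∈ (⨅ i : ℕ, (maximalIdeal R) ^ i • (⊤ : Submodule R (R ⧸ c))) := by
    rw [Submodule.mem_iInf]
    intro i
    have hxi : x ∈ c + maximalIdeal R ^ i := (Submodule.mem_iInf _).mp hx i
    rw [Submodule.add_eq_sup] at hxi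
    obtain ⟨y, hy, z, hz, rfl⟩ := Submodule.mem_sup.mp hxi
    have h2 : Submodule.map c.mkQ ((maximalIdeal R) ^ i • (⊤ : Submodule R R))
        = (maximalIdeal R) ^ i • (⊤ : Submodule R (R ⧸ c)) := by
      rw [Submodule.map_smul'', Submodule.map_top, Submodule.range_mkQ]
    rw [← h2]
    have hz' : z ∈ (maximalIdeal R) ^ i • (⊤ : Submodule R R) := by
      rwa [Ideal.smul_eq_mul, Ideal.mul_top]
    have hy0 : c.mkQ y = 0 := by
      rw [Submodule.mkQ_apply, Submodule.Quotient.mk_eq_zero]; exact hy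
    have : c.mkQ (y + z) = c.mkQ z := by rw [map_add, hy0, zero_add]
    rw [this]
    exact Submodule.mem_map_of_mem hz'
  rw [key, Submodule.mem_bot] at hmem
  rw [← Submodule.Quotient.mk_eq_zero c]
  exact hmem

end Aux

/-- If `(𝔞_t)` is a decreasing sequence of ideals with intersection `𝔟` and `R/𝔟` is
`𝔪`-adically complete, then `⋂_t (J𝔞_t + 𝔪^t) ⊆ J𝔟`. -/
theorem iInf_mul_add_pow_le {R : Type*} [CommRing R] [IsLocalRing R] [IsNoetherianRing R]
    (J b : Ideal R) (a : ℕ → Ideal R) (hdec : ∀ t, a (t + 1) ≤ a t)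
    (hint : (⨅ (t : ℕ) (_ : 1 ≤ t), a t) = b)
    (hcomp : IsAdicComplete (Ideal.map (Ideal.Quotient.mk b) (maximalIdeal R)) (R ⧸ b)) :
    (⨅ (t : ℕ) (_ : 1 ≤ t), (J * a t + maximalIdeal R ^ t)) ≤ J * b := by
  have hant : Antitone a := antitone_nat_of_succ_le hdec
  set m : Ideal R := maximalIdeal R with hm
  set a' : ℕ → Ideal R := fun t => a (t + 1) with ha'
  have hb_le' : ∀ t, b ≤ a' t := fun t => by
    rw [← hint]; exact (iInf_le _ (t + 1)).trans (iInf_le _ t.succ_pos)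
  have ha'ant : Antitone a' := fun s t hst => hant (by omega)
  set π : R →+* R ⧸ b := Ideal.Quotient.mk b with hπ
  set I : Ideal (R ⧸ b) := Ideal.map π m with hI
  -- Chevalley's theorem for `R ⧸ b`
  have chev : ∀ n : ℕ, ∃ t : ℕ, a' t ≤ b + m ^ n := by
    by_contra hcon
    push_neg at hcon
    obtain ⟨N, hN⟩ := hcon
    have hstab : ∀ n : ℕ, ∃ T, ∀ s, T ≤ s → a' s + m ^ n = a' T + m ^ n := by
      intro n
      exact ideal_stabilizes n (fun t => a' t + m ^ n)
        (fun s t hst => by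
          simp only [Submodule.add_eq_sup]
          exact sup_le_sup_right (ha'ant hst) _)
        (fun t => by simp only [Submodule.add_eq_sup]; exact le_sup_right)
    choose T hT using hstab
    set q : ℕ → Ideal R := fun n => a' (T n) + m ^ n with hq
    have hq_le : ∀ n t, q n ≤ a' t + m ^ n := by
      intro n t
      calc q n = a' (max (T n) t) + m ^ n := (hT n _ (le_max_left _ _)).symm
        _ ≤ a' t + m ^ n := by
            simp only [Submodule.add_eq_sup]
            exact sup_le_sup_right (ha'ant (le_max_right _ _)) _
    have hq_succ : ∀ n, q n = q (n + 1) + m ^ n := by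
      intro n
      calc q n = a' (max (T n) (T (n + 1))) + m ^ n := (hT n _ (le_max_left _ _)).symm
        _ = (a' (max (T n) (T (n + 1))) + m ^ (n + 1)) + m ^ n := by
            simp only [Submodule.add_eq_sup]
            rw [sup_assoc, (sup_eq_right.mpr (Ideal.pow_le_pow_right n.le_succ) : m ^ (n + 1) ⊔ m ^ n = m ^ n)]
        _ = q (n + 1) + m ^ n := by
            rw [hT (n + 1) _ (le_max_right _ _)]
    have hqN : ¬ q N ≤ b + m ^ N := by
      intro h
      refine hN (T N) (le_trans ?_ h)
      show a' (T N) ≤ a' (T N) + m ^ N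
      simp only [Submodule.add_eq_sup]
      exact le_sup_left
    obtain ⟨x0, hx0q, hx0⟩ := SetLike.not_le_iff_exists.mp hqN
    have key : ∀ k, ∀ y ∈ q (N + k), ∃ z, z ∈ q (N + k + 1) ∧ y - z ∈ m ^ (N + k) := by
      intro k y hy
      rw [hq_succ (N + k), Submodule.add_eq_sup] at hy
      obtain ⟨z, hz, w, hw, rfl⟩ := Submodule.mem_sup.mp hy
      exact ⟨z, hz, by simpa using hw⟩
    choose f hf1 hf2 using key
    obtain ⟨x, hx00, hxq, hxd⟩ : ∃ x : ℕ → R, x 0 = x0 ∧ (∀ k, x k ∈ q (N + k)) ∧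
        ∀ k, x k - x (k + 1) ∈ m ^ (N + k) := by
      let X : ∀ k : ℕ, {y : R // y ∈ q (N + k)} := fun k =>
        Nat.rec ⟨x0, hx0q⟩ (fun k p => ⟨f k p.1 p.2, hf1 k p.1 p.2⟩) k
      exact ⟨fun k => (X k).1, rfl, fun k => (X k).2, fun k => hf2 k (X k).1 (X k).2⟩
    have tele : ∀ k l, k ≤ l → x k - x l ∈ m ^ (N + k) := by
      intro k l hkl
      induction l with
      | zero =>
        obtain rfl : k = 0 := Nat.le_zero.mp hkl
        simpa using Submodule.zero_mem _
      | succ l ih =>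
        rcases Nat.lt_or_ge k (l + 1) with h | h
        · have h1 := ih (Nat.lt_succ_iff.mp h)
          have h2 : x l - x (l + 1) ∈ m ^ (N + k) :=
            Ideal.pow_le_pow_right (by omega) (hxd l)
          have h3 := Submodule.add_mem _ h1 h2
          rwa [sub_add_sub_cancel] at h3
        · obtain rfl : k = l + 1 := le_antisymm hkl h
          simpa using Submodule.zero_mem _
    obtain ⟨L, hL⟩ := IsPrecomplete.prec hcomp.toIsPrecomplete
      (f := fun n => π (x n)) (by
        intro s t hst
        rw [SModEq.sub_mem, Ideal.smul_eq_mul, Ideal.mul_top, ← map_sub]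
        rw [hI, ← Ideal.map_pow]
        exact Ideal.mem_map_of_mem π (Ideal.pow_le_pow_right (by omega) (tele s t hst)))
    obtain ⟨y, rfl⟩ := Ideal.Quotient.mk_surjective L
    have hyx : ∀ n, y - x n ∈ b ⊔ m ^ n := by
      intro n
      have h1 : π (x n) - π y ∈ I ^ n := by
        have h := SModEq.sub_mem.mp (hL n)
        rwa [Ideal.smul_eq_mul, Ideal.mul_top] at h
      have h2 : x n - y ∈ Ideal.comap π (I ^ n) := by
        rw [Ideal.mem_comap, map_sub]; exact h1
      rw [hI, ← Ideal.map_pow, Ideal.comap_map_of_surjective π Ideal.Quotient.mk_surjective]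
        at h2
      have hker : Ideal.comap π ⊥ = b := by
        rw [← RingHom.ker_eq_comap_bot, hπ, Ideal.mk_ker]
      rw [hker] at h2
      have := Submodule.neg_mem _ h2
      rw [neg_sub] at this
      rwa [sup_comm] at this
    have hya : ∀ t, y ∈ a' t := by
      intro t
      apply iInf_add_pow_le (a' t)
      rw [Submodule.mem_iInf]
      intro n
      have h1 : x n ∈ a' t + m ^ n := by
        refine le_trans (hq_le (N + n) t) ?_ (hxq n)
        rw [Submodule.add_eq_sup, Submodule.add_eq_sup]
        exact sup_le_sup_left (Ideal.pow_le_pow_right (by omega)) _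
      have h2 : y - x n ∈ a' t ⊔ m ^ n :=
        (sup_le_sup_right (hb_le' t) _) (hyx n)
      have h1' : x n ∈ a' t ⊔ m ^ n := by rwa [Submodule.add_eq_sup] at h1
      have h3 := Submodule.add_mem _ h2 h1'
      rw [sub_add_cancel] at h3
      rwa [Submodule.add_eq_sup]
    have hyb : y ∈ b := by
      rw [← hint, Submodule.mem_iInf]
      intro t
      rw [Submodule.mem_iInf]
      intro ht
      obtain ⟨t', rfl⟩ : ∃ t', t = t' + 1 := ⟨t - 1, by omega⟩
      exact hya t'
    apply hx0
    have h1 : x 0 - x N ∈ m ^ N := by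
      have := tele 0 N (Nat.zero_le N)
      simpa using this
    have h2 : y - x N ∈ b ⊔ m ^ N := hyx N
    have h3 : x0 = ((x 0 - x N) - (y - x N)) + y := by rw [hx00]; ring
    rw [Submodule.add_eq_sup, h3]
    exact Submodule.add_mem _ (Submodule.sub_mem _ (Submodule.mem_sup_right h1) h2)
      (Submodule.mem_sup_left hyb)
  -- conclusion via Krull intersection
  intro z hz
  apply iInf_add_pow_le (J * b)
  rw [Submodule.mem_iInf]
  intro n
  obtain ⟨t0, hc⟩ := chev n
  set t : ℕ := max (t0 + 1) n with ht
  have h1t : 1 ≤ t := le_trans (by omega) (le_max_left _ _)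
  have hz' : z ∈ J * a t + m ^ t := by
    have := (Submodule.mem_iInf _).mp hz t
    exact (Submodule.mem_iInf _).mp this h1t
  have hat : a t ≤ b + m ^ n := le_trans (hant (le_max_left _ _)) hc
  have hle : J * a t + m ^ t ≤ J * b + m ^ n := by
    rw [Submodule.add_eq_sup, Submodule.add_eq_sup]
    refine sup_le ?_ ((Ideal.pow_le_pow_right (le_max_right _ _)).trans le_sup_right)
    refine le_trans (Ideal.mul_mono_right hat) ?_
    rw [Submodule.add_eq_sup, Ideal.mul_sup]
    exact sup_le le_sup_left (Ideal.mul_le_right.trans le_sup_right)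
  exact hle hz'
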